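/- Let X be a standard normal random variable and define μ(t) := E[X | X ≥ t] for t ∈ ℝ. Then μ(t) = φ(t)/(1 − Φ(t)) = e^{−t²/2} / ∫_t^∞ e^{−s²/2} ds for every t ∈ ℝ, μ is differentiable, and |μ'(t)| ≤ 100 for all t ∈ ℝ. -/

import Mathlib

open MeasureTheory Real

noncomputable section

/-- The standard normal cumulative distribution function `Φ`. -/
def stdGaussianCDF (x : ℝ) : ℝ :=
  (Real.sqrt (2 * Real.pi))⁻¹ * ∫ t in Set.Iic x, Real.exp (-t ^ 2 / 2)

/-- The standard normal density `φ`. -/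
def stdGaussianPDF (x : ℝ) : ℝ :=
  (Real.sqrt (2 * Real.pi))⁻¹ * Real.exp (-x ^ 2 / 2)

/-- `μ(t) = E[X | X ≥ t] = (∫_t^∞ s φ(s) ds)/(1 - Φ(t))` for a standard normal `X`. -/
def truncMean (t : ℝ) : ℝ :=
  (∫ s in Set.Ici t, s * stdGaussianPDF s) / (1 - stdGaussianCDF t)

namespace TruncAux

open Set Filter Topology

lemma cont_exp : Continuous (fun s : ℝ => Real.exp (-s ^ 2 / 2)) := by continuity

lemma int_exp : Integrable (fun s : ℝ => Real.exp (-s ^ 2 / 2)) := by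
  have h := integrable_exp_neg_mul_sq (show (0:ℝ) < 1/2 by norm_num)
  exact h.congr (Eventually.of_forall fun x => by ring_nf)

lemma int_mul_exp : Integrable (fun s : ℝ => s * Real.exp (-s ^ 2 / 2)) := by
  apply (integrable_exp_neg_mul_sq (show (0:ℝ) < 1/4 by norm_num)).mono'
  · exact (continuous_id.mul (by continuity)).aestronglyMeasurable
  · refine Eventually.of_forall fun x => ?_
    rw [Real.norm_eq_abs, abs_mul, abs_of_nonneg (exp_pos _).le]
    have h1 : |x| ≤ Real.exp (x ^ 2 / 4) := by
      have := Real.add_one_le_exp (x ^ 2 / 4)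
      nlinarith [abs_nonneg x, sq_abs x, sq_nonneg (|x| - 2)]
    calc |x| * Real.exp (-x ^ 2 / 2) ≤ Real.exp (x ^ 2 / 4) * Real.exp (-x ^ 2 / 2) :=
          mul_le_mul_of_nonneg_right h1 (exp_pos _).le
      _ = Real.exp (-(1/4) * x ^ 2) := by rw [← Real.exp_add]; ring_nf

lemma tendsto_N : Tendsto (fun t : ℝ => Real.exp (-t ^ 2 / 2)) atTop (𝓝 0) := by
  apply Real.tendsto_exp_atBot.comp
  have h : Tendsto (fun t : ℝ => t ^ 2 / 2) atTop atTop :=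
    (tendsto_pow_atTop two_ne_zero).atTop_div_const (by norm_num)
  exact (tendsto_neg_atBot_iff.mpr h).congr fun t => by ring

lemma hasDerivAt_negexp (x : ℝ) :
    HasDerivAt (fun s : ℝ => -Real.exp (-s ^ 2 / 2)) (x * Real.exp (-x ^ 2 / 2)) x := by
  have h1 : HasDerivAt (fun s : ℝ => -s ^ 2 / 2) (-x) x := by
    have h := ((hasDerivAt_pow 2 x).neg).div_const 2
    refine h.congr_deriv ?_
    norm_num
    ring
  have h2 := (h1.exp).neg
  refine h2.congr_deriv ?_
  ring

lemma integral_mul_exp (t : ℝ) :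
    ∫ s in Set.Ici t, s * Real.exp (-s ^ 2 / 2) = Real.exp (-t ^ 2 / 2) := by
  rw [integral_Ici_eq_integral_Ioi]
  have hd : ∀ x ∈ Ici t, HasDerivAt (fun s : ℝ => -Real.exp (-s ^ 2 / 2))
      (x * Real.exp (-x ^ 2 / 2)) x := fun x _ => hasDerivAt_negexp x
  have ht : Tendsto (fun s : ℝ => -Real.exp (-s ^ 2 / 2)) atTop (𝓝 0) := by
    simpa using tendsto_N.neg
  rw [integral_Ioi_of_hasDerivAt_of_tendsto' hd int_mul_exp.integrableOn ht]
  simp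

lemma Ig_pos (t : ℝ) : 0 < ∫ s in Set.Ici t, Real.exp (-s ^ 2 / 2) := by
  rw [setIntegral_pos_iff_support_of_nonneg_ae
    (Eventually.of_forall fun x => (exp_pos _).le) int_exp.integrableOn]
  have : Function.support (fun s : ℝ => Real.exp (-s ^ 2 / 2)) = Set.univ := by
    ext x; simp [Function.mem_support, (exp_pos _).ne']
  rw [this, Set.univ_inter]
  simp [Real.volume_Ici]

lemma Ig_ge (t a b : ℝ) (ha : 0 ≤ a) (hta : t ≤ a) (hab : a ≤ b) :
    (b - a) * Real.exp (-b ^ 2 / 2) ≤ ∫ s in Set.Ici t, Real.exp (-s ^ 2 / 2) := by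
  have h1 : ∫ s in Set.Ioc a b, Real.exp (-s ^ 2 / 2)
      ≤ ∫ s in Set.Ici t, Real.exp (-s ^ 2 / 2) := by
    apply setIntegral_mono_set int_exp.integrableOn
      (Eventually.of_forall fun x => (exp_pos _).le)
    exact Eventually.of_forall fun x hx => le_trans hta hx.1.le
  refine le_trans ?_ h1
  have h2 : ∫ s in Set.Ioc a b, (Real.exp (-b ^ 2 / 2))
      ≤ ∫ s in Set.Ioc a b, Real.exp (-s ^ 2 / 2) := by
    apply setIntegral_mono_on (integrableOn_const (by simp) (by simp))
      int_exp.integrableOn measurableSet_Ioc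
    intro x hx
    apply Real.exp_le_exp.mpr
    have : x ^ 2 ≤ b ^ 2 := by nlinarith [hx.1, hx.2]
    linarith
  refine le_trans (le_of_eq ?_) h2
  rw [setIntegral_const]
  simp [Real.volume_Ioc, ENNReal.toReal_ofReal (by linarith : (0:ℝ) ≤ b - a), hab]

lemma Ig_eq (t : ℝ) : (∫ s in Set.Ici t, Real.exp (-s ^ 2 / 2))
    = (∫ s in Set.Ici (0:ℝ), Real.exp (-s ^ 2 / 2)) - ∫ s in (0:ℝ)..t, Real.exp (-s ^ 2 / 2) := by
  have key : ∀ u : ℝ, (∫ s in Set.Ici u, Real.exp (-s ^ 2 / 2))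
      = (∫ s : ℝ, Real.exp (-s ^ 2 / 2)) - ∫ s in Set.Iic u, Real.exp (-s ^ 2 / 2) := by
    intro u
    rw [integral_Ici_eq_integral_Ioi,
      ← intervalIntegral.integral_Iic_add_Ioi int_exp.integrableOn int_exp.integrableOn]
    ring
  rw [key t, key 0,
    ← intervalIntegral.integral_Iic_sub_Iic int_exp.integrableOn int_exp.integrableOn]
  ring

lemma Ig_hasDeriv (t : ℝ) :
    HasDerivAt (fun u : ℝ => ∫ s in Set.Ici u, Real.exp (-s ^ 2 / 2))
      (-Real.exp (-t ^ 2 / 2)) t := by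
  have h : HasDerivAt (fun u : ℝ => ∫ s in (0:ℝ)..u, Real.exp (-s ^ 2 / 2))
      (Real.exp (-t ^ 2 / 2)) t :=
    intervalIntegral.integral_hasDerivAt_right int_exp.intervalIntegrable
      (cont_exp.stronglyMeasurableAtFilter _ _) cont_exp.continuousAt
  have h2 := (hasDerivAt_const t (∫ s in Set.Ici (0:ℝ), Real.exp (-s ^ 2 / 2))).sub h
  refine HasDerivAt.congr_of_eventuallyEq ?_ (Eventually.of_forall Ig_eq)
  refine h2.congr_deriv ?_
  ring

lemma mills (t : ℝ) (ht : 0 < t) :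
    Real.exp (-t ^ 2 / 2) ≤ (t + 1/t) * ∫ s in Set.Ici t, Real.exp (-s ^ 2 / 2) := by
  set h : ℝ → ℝ := fun s => Real.exp (-s ^ 2 / 2) + Real.exp (-s ^ 2 / 2) / s ^ 2 with hh
  have hderiv : ∀ x ∈ Ici t, HasDerivAt (fun s : ℝ => -Real.exp (-s ^ 2 / 2) / s) (h x) x := by
    intro x hx
    have hx0 : x ≠ 0 := by have := lt_of_lt_of_le ht hx; positivity
    have := (hasDerivAt_negexp x).div (hasDerivAt_id x) hx0
    refine this.congr_deriv ?_
    simp only [id, hh]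
    field_simp
    ring
  have hpos : ∀ x ∈ Ioi t, 0 ≤ h x := by
    intro x hx
    have hx0 : (0:ℝ) < x := lt_trans ht hx
    have := exp_pos (-x ^ 2 / 2)
    positivity
  have htend : Tendsto (fun s : ℝ => -Real.exp (-s ^ 2 / 2) / s) atTop (𝓝 0) := by
    apply Tendsto.div_atTop (a := (0:ℝ)) _ tendsto_id
    simpa using tendsto_N.neg
  have hint : IntegrableOn h (Ioi t) :=
    integrableOn_Ioi_deriv_of_nonneg' hderiv hpos htend
  have hval : ∫ x in Ioi t, h x = Real.exp (-t ^ 2 / 2) / t := by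
    rw [integral_Ioi_of_hasDerivAt_of_nonneg' hderiv hpos htend]
    field_simp
    ring
  have hint2 : IntegrableOn (fun s : ℝ => Real.exp (-s ^ 2 / 2) / s ^ 2) (Ioi t) := by
    have h' := hint.sub int_exp.integrableOn
    apply h'.congr
    exact Eventually.of_forall fun x => by simp [hh]
  have hsplit : ∫ x in Ioi t, h x = (∫ s in Ioi t, Real.exp (-s ^ 2 / 2))
      + ∫ s in Ioi t, Real.exp (-s ^ 2 / 2) / s ^ 2 :=
    integral_add int_exp.integrableOn hint2
  have hJ : (∫ s in Ioi t, Real.exp (-s ^ 2 / 2) / s ^ 2)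
      ≤ ∫ s in Ioi t, Real.exp (-s ^ 2 / 2) / t ^ 2 := by
    apply setIntegral_mono_on hint2 (int_exp.integrableOn.div_const _) measurableSet_Ioi
    intro x hx
    have hx0 : t < x := mem_Ioi.mp hx
    exact div_le_div_of_nonneg_left (exp_pos _).le (by positivity) (by nlinarith)
  have hIio : (∫ s in Ioi t, Real.exp (-s ^ 2 / 2) / t ^ 2)
      = (∫ s in Ioi t, Real.exp (-s ^ 2 / 2)) / t ^ 2 := integral_div _ _
  rw [integral_Ici_eq_integral_Ioi]
  set I := ∫ s in Ioi t, Real.exp (-s ^ 2 / 2) with hI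
  have hNt : Real.exp (-t ^ 2 / 2) / t ≤ I + I / t ^ 2 := by
    rw [← hval, hsplit]
    rw [hIio] at hJ
    linarith
  rw [div_le_iff₀ ht] at hNt
  calc Real.exp (-t ^ 2 / 2) ≤ (I + I / t ^ 2) * t := hNt
    _ = (t + 1/t) * I := by field_simp

lemma total : ∫ s : ℝ, Real.exp (-s ^ 2 / 2) = Real.sqrt (2 * Real.pi) := by
  have h := integral_gaussian (1/2)
  rw [show Real.pi / (1/2) = 2 * Real.pi by ring] at h
  rw [← h]
  exact integral_congr_ae (Eventually.of_forall fun x => by ring_nf)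

lemma one_sub_cdf (t : ℝ) : 1 - stdGaussianCDF t
    = (Real.sqrt (2 * Real.pi))⁻¹ * ∫ s in Set.Ici t, Real.exp (-s ^ 2 / 2) := by
  have hc : (0:ℝ) < Real.sqrt (2 * Real.pi) := Real.sqrt_pos.mpr (by positivity)
  have key : (∫ s in Set.Ici t, Real.exp (-s ^ 2 / 2))
      = Real.sqrt (2 * Real.pi) - ∫ s in Set.Iic t, Real.exp (-s ^ 2 / 2) := by
    rw [← total, integral_Ici_eq_integral_Ioi,
      ← intervalIntegral.integral_Iic_add_Ioi int_exp.integrableOn int_exp.integrableOn]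
    ring
  rw [stdGaussianCDF, key, mul_sub, inv_mul_cancel₀ hc.ne']

lemma truncMean_eq (t : ℝ) :
    truncMean t = Real.exp (-t ^ 2 / 2) / ∫ s in Set.Ici t, Real.exp (-s ^ 2 / 2) := by
  have hc : (0:ℝ) < Real.sqrt (2 * Real.pi) := Real.sqrt_pos.mpr (by positivity)
  have hnum : (∫ s in Set.Ici t, s * stdGaussianPDF s)
      = (Real.sqrt (2 * Real.pi))⁻¹ * Real.exp (-t ^ 2 / 2) := by
    unfold stdGaussianPDF
    rw [show (fun s : ℝ => s * ((Real.sqrt (2 * Real.pi))⁻¹ * Real.exp (-s ^ 2 / 2)))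
        = (fun s : ℝ => (Real.sqrt (2 * Real.pi))⁻¹ * (s * Real.exp (-s ^ 2 / 2))) from
        funext fun s => by ring, MeasureTheory.integral_const_mul, integral_mul_exp]
  rw [truncMean, hnum, one_sub_cdf,
    mul_div_mul_left _ _ (by positivity : (Real.sqrt (2 * Real.pi))⁻¹ ≠ 0)]

lemma truncMean_eq_pdf (t : ℝ) :
    truncMean t = stdGaussianPDF t / (1 - stdGaussianCDF t) := by
  rw [truncMean_eq, stdGaussianPDF, one_sub_cdf,
    mul_comm, mul_comm ((Real.sqrt (2 * Real.pi))⁻¹) _, mul_div_mul_right]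
  positivity

lemma truncMean_hasDeriv (t : ℝ) :
    HasDerivAt truncMean (truncMean t * (truncMean t - t)) t := by
  set I : ℝ → ℝ := fun u => ∫ s in Set.Ici u, Real.exp (-s ^ 2 / 2) with hI
  have hIpos : 0 < I t := Ig_pos t
  have hN : HasDerivAt (fun s : ℝ => Real.exp (-s ^ 2 / 2)) (-t * Real.exp (-t ^ 2 / 2)) t := by
    have := (hasDerivAt_negexp t).neg
    simpa [Pi.neg_def] using this
  have hdiv := hN.div (Ig_hasDeriv t) hIpos.ne'
  have heq : truncMean = fun u => Real.exp (-u ^ 2 / 2) / I u := funext truncMean_eq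
  rw [heq]
  refine hdiv.congr_deriv ?_
  simp only [hI] at hIpos ⊢
  generalize (∫ s in Set.Ici t, Real.exp (-s ^ 2 / 2)) = J at hIpos ⊢
  field_simp
  ring

lemma neg_mul_exp_le_one (t : ℝ) : -t * Real.exp (-t ^ 2 / 2) ≤ 1 := by
  rcases le_or_gt 0 t with h | h
  · have := exp_pos (-t ^ 2 / 2)
    nlinarith
  · have h1 : -t ≤ Real.exp (t ^ 2 / 2) := by
      have := Real.add_one_le_exp (t ^ 2 / 2)
      nlinarith [sq_nonneg (t + 1)]
    have h2 := mul_le_mul_of_nonneg_right h1 (exp_pos (-t ^ 2 / 2)).le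
    rwa [← Real.exp_add, show t ^ 2 / 2 + -t ^ 2 / 2 = 0 by ring, Real.exp_zero] at h2

lemma exp2_bound : Real.exp 2 ≤ 8 := by
  have h := Real.exp_one_lt_d9
  have h3 : Real.exp 2 = (Real.exp 1) ^ 2 := by
    rw [← Real.exp_nat_mul]; norm_num
  have h1 : Real.exp 1 ≤ 2.72 := by linarith
  have h2 : (Real.exp 1) ^ 2 ≤ 2.72 ^ 2 := pow_le_pow_left₀ (Real.exp_pos 1).le h1 2
  rw [h3]
  nlinarith

lemma mu_sub_nonneg (t : ℝ) : 0 ≤ truncMean t * (truncMean t - t) := by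
  set I := ∫ s in Set.Ici t, Real.exp (-s ^ 2 / 2) with hI
  have hIpos : 0 < I := Ig_pos t
  have hμ : truncMean t = Real.exp (-t ^ 2 / 2) / I := truncMean_eq t
  have hμpos : 0 < truncMean t := by rw [hμ]; positivity
  have hkey : t * I ≤ Real.exp (-t ^ 2 / 2) := by
    have hmono : (∫ s in Set.Ici t, t * Real.exp (-s ^ 2 / 2))
        ≤ ∫ s in Set.Ici t, s * Real.exp (-s ^ 2 / 2) := by
      apply setIntegral_mono_on ((int_exp.restrict).const_mul t)
        int_mul_exp.integrableOn measurableSet_Ici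
      intro x hx
      exact mul_le_mul_of_nonneg_right hx (exp_pos _).le
    rwa [MeasureTheory.integral_const_mul, integral_mul_exp] at hmono
  have hsub : 0 ≤ truncMean t - t := by
    rw [hμ, le_sub_iff_add_le, zero_add, le_div_iff₀ hIpos]
    exact hkey
  exact mul_nonneg hμpos.le hsub

lemma deriv_bound (t : ℝ) : truncMean t * (truncMean t - t) ≤ 100 := by
  set I := ∫ s in Set.Ici t, Real.exp (-s ^ 2 / 2) with hI
  have hIpos : 0 < I := Ig_pos t
  have hμ : truncMean t = Real.exp (-t ^ 2 / 2) / I := truncMean_eq t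
  have hμpos : 0 < truncMean t := by rw [hμ]; positivity
  have hE : Real.exp ((9:ℝ)/8) ≤ 8 := by
    have h2 : Real.exp ((9:ℝ)/8) ≤ Real.exp 2 := Real.exp_le_exp.mpr (by norm_num)
    linarith [exp2_bound]
  have hNle : Real.exp (-t ^ 2 / 2) ≤ 1 := by
    rw [Real.exp_le_one_iff]
    nlinarith [sq_nonneg t]
  rcases le_or_gt t (1/2) with hhalf | hhalf
  · have hIge : Real.exp (-(9:ℝ)/8) ≤ I := by
      have h := Ig_ge t (1/2) (3/2) (by norm_num) hhalf (by norm_num)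
      calc Real.exp (-(9:ℝ)/8) = (3/2 - 1/2) * Real.exp (-((3:ℝ)/2) ^ 2 / 2) := by norm_num
        _ ≤ I := h
    have hμle : truncMean t ≤ Real.exp (-t ^ 2 / 2) * Real.exp ((9:ℝ)/8) := by
      rw [hμ, div_le_iff₀ hIpos]
      calc Real.exp (-t ^ 2 / 2)
          = Real.exp (-t ^ 2 / 2) * Real.exp ((9:ℝ)/8) * Real.exp (-(9:ℝ)/8) := by
            rw [mul_assoc, ← Real.exp_add]; norm_num
        _ ≤ Real.exp (-t ^ 2 / 2) * Real.exp ((9:ℝ)/8) * I :=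
            mul_le_mul_of_nonneg_left hIge (by positivity)
    have h1 : truncMean t ≤ 8 := by
      refine le_trans hμle ?_
      nlinarith [Real.exp_pos (-t ^ 2 / 2), Real.exp_pos ((9:ℝ)/8)]
    have h2 : truncMean t * truncMean t ≤ 64 := by nlinarith
    rcases le_or_gt 0 t with hsign | hsign
    · have h3 : 0 ≤ t * truncMean t := mul_nonneg hsign hμpos.le
      nlinarith
    · have h3 : -t * truncMean t ≤ 8 := by
        have ha : -t * truncMean t
            ≤ -t * (Real.exp (-t ^ 2 / 2) * Real.exp ((9:ℝ)/8)) :=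
          mul_le_mul_of_nonneg_left hμle (by linarith)
        have hb : -t * Real.exp (-t ^ 2 / 2) ≤ 1 := neg_mul_exp_le_one t
        nlinarith [Real.exp_pos ((9:ℝ)/8), Real.exp_pos (-t ^ 2 / 2)]
      nlinarith
  · have ht0 : 0 < t := by linarith
    have hm := mills t ht0
    have hμle : truncMean t ≤ t + 1/t := by
      rw [hμ, div_le_iff₀ hIpos]
      have htpos : 0 < t + 1/t := by positivity
      calc Real.exp (-t ^ 2 / 2) ≤ (t + 1/t) * I := hm
        _ = (t + 1/t) * I := rfl
    rcases le_or_gt (truncMean t - t) 0 with hneg | hpos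
    · have := mul_nonpos_of_nonneg_of_nonpos hμpos.le hneg
      linarith
    · have hsub : truncMean t - t ≤ 1/t := by linarith
      have hinv : (1:ℝ)/t ≤ 2 := by
        rw [div_le_iff₀ ht0]; linarith
      have : truncMean t * (truncMean t - t) ≤ (t + 1/t) * (1/t) :=
        mul_le_mul hμle hsub hpos.le (by positivity)
      have hexp : (t + 1/t) * (1/t) = 1 + (1/t) * (1/t) := by
        field_simp
      nlinarith

end TruncAux

theorem truncMean_props :
    (∀ t : ℝ, truncMean t = stdGaussianPDF t / (1 - stdGaussianCDF t)) ∧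
    (∀ t : ℝ, truncMean t =
      Real.exp (-t ^ 2 / 2) / ∫ s in Set.Ici t, Real.exp (-s ^ 2 / 2)) ∧
    Differentiable ℝ truncMean ∧
    ∀ t : ℝ, |deriv truncMean t| ≤ 100 := by
  refine ⟨TruncAux.truncMean_eq_pdf, TruncAux.truncMean_eq,
    fun t => (TruncAux.truncMean_hasDeriv t).differentiableAt, fun t => ?_⟩
  rw [(TruncAux.truncMean_hasDeriv t).deriv, abs_le]
  exact ⟨by linarith [TruncAux.mu_sub_nonneg t], TruncAux.deriv_bound t⟩
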